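/- Let m > 1 be an integer with m ≡ 2 (mod 4), let E'_m be the elliptic curve over ℚ defined by y² = x³ + x - m⁶, and let P' = (m², m) and Q' = (m⁶, m⁹) be rational points on E'_m. Then the point P' + Q', whose affine coordinates are ((m⁴ + 1)/m², (-2m⁴ - 1)/m³), does not lie in 2E'_m(ℚ); i.e., P' + Q' is nontrivial in E'_m(ℚ)/2E'_m(ℚ). -/

import Mathlib

/-- The elliptic curve `E'_m : y² = x³ + x - m⁶` over `ℚ`. -/
def Em' (m : ℤ) : WeierstrassCurve ℚ := ⟨0, 0, 0, 1, -(m : ℚ) ^ 6⟩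

/-- The doubling map `P ↦ 2 • P` as an additive group homomorphism; its range is the
subgroup `2A` of `A`. -/
def doublingHom (A : Type*) [AddCommGroup A] : A →+ A :=
  AddMonoidHom.mk' (fun a => 2 • a) (fun a b => smul_add 2 a b)

open WeierstrassCurve.Affine in
lemma some_congr' {F : Type*} [Field F] {W : WeierstrassCurve.Affine F} {x y x' y' : F}
    (hx : x = x') (hy : y = y') (h : W.Nonsingular x y) (h' : W.Nonsingular x' y') :
    Point.some _ _ h = Point.some _ _ h' := by subst hx; subst hy; rfl


local notation "v" => padicValRat 2

lemma v_odd_int (z : ℤ) (hz : z % 2 = 1) : v (z : ℚ) = 0 := by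
  rw [padicValRat.of_int, padicValInt.eq_zero_of_not_dvd (by omega)]; rfl

lemma v_two : v (2 : ℚ) = 1 := by
  simpa using padicValRat.self (p := 2) one_lt_two

-- if v x = 0 then num and den of x are both odd
lemma num_den_odd {x : ℚ} (hx0 : x ≠ 0) (hv : v x = 0) :
    x.num % 2 = 1 ∧ (x.den : ℤ) % 2 = 1 := by
  have hn0 : x.num ≠ 0 := Rat.num_ne_zero.mpr hx0
  have hd0 : x.den ≠ 0 := x.den_nz
  have hvd : padicValRat 2 x = padicValInt 2 x.num - padicValNat 2 x.den := padicValRat_def 2 x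
  have hcop : Nat.Coprime x.num.natAbs x.den := x.reduced
  by_cases hn : (2 : ℤ) ∣ x.num
  · -- num even ⇒ den odd ⇒ padicValNat den = 0 ⇒ padicValInt num = 0, contra
    have hdodd : ¬ (2 ∣ x.den) := by
      intro hd
      have h2n : 2 ∣ x.num.natAbs := by omega
      exact absurd (Nat.eq_one_of_dvd_coprimes hcop h2n hd) (by norm_num)
    have hd : padicValNat 2 x.den = 0 := padicValNat.eq_zero_of_not_dvd hdodd
    have hni : padicValInt 2 x.num = 0 := by omega
    have := (padicValInt_dvd_iff (p := 2) 1 x.num).mp (by simpa using hn)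
    omega
  · constructor
    · omega
    · -- num odd ⇒ padicValInt num = 0 ⇒ padicValNat den = 0 ⇒ den odd
      have hni : padicValInt 2 x.num = 0 := padicValInt.eq_zero_of_not_dvd hn
      have hd : padicValNat 2 x.den = 0 := by omega
      by_contra hdm
      have hdvd : 2 ∣ x.den := by omega
      have := (padicValNat_dvd_iff (p := 2) 1 x.den).mp (by simpa using hdvd)
      omega

lemma v_sq_add_one {x : ℚ} (hx0 : x ≠ 0) (hv : v x = 0) : v (x ^ 2 + 1) = 1 := by
  obtain ⟨hn, hd⟩ := num_den_odd hx0 hv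
  obtain ⟨a, ha⟩ : ∃ a, x.num = 2 * a + 1 := ⟨(x.num - 1)/2, by omega⟩
  obtain ⟨b, hb⟩ : ∃ b, (x.den : ℤ) = 2 * b + 1 := ⟨((x.den : ℤ) - 1)/2, by omega⟩
  have hd0 : ((x.den : ℤ) : ℚ) ≠ 0 := by
    exact_mod_cast (by positivity : ((x.den:ℚ)) ≠ 0)
  have hmul : x * ((x.den : ℤ) : ℚ) = (x.num : ℚ) := by
    push_cast; exact_mod_cast Rat.mul_den_eq_num x
  have hrw : x ^ 2 + 1 = ((x.num ^ 2 + (x.den:ℤ) ^ 2 : ℤ) : ℚ) / (((x.den:ℤ) ^ 2 : ℤ) : ℚ) := by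
    rw [eq_div_iff (by positivity)]; push_cast
    linear_combination (x * (x.den:ℚ) + (x.num:ℚ)) * hmul
  have hnum : (x.num ^ 2 + (x.den:ℤ) ^ 2 : ℤ) = 2 * (2 * (a^2 + a + b^2 + b) + 1) := by
    rw [ha, hb]; ring
  have hdz : (x.den : ℤ) ≠ 0 := by omega
  have hdsq : ((x.den:ℤ))^2 = 2*(2*b^2+2*b) + 1 := by rw [hb]; ring
  rw [hrw, padicValRat.div (by exact_mod_cast (by rw [hnum]; omega : (x.num ^ 2 + (x.den:ℤ) ^ 2 : ℤ) ≠ 0))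
    (by exact_mod_cast pow_ne_zero 2 hdz)]
  have h1 : v (((x.num ^ 2 + (x.den:ℤ) ^ 2 : ℤ) : ℚ)) = 1 := by
    have : ((x.num ^ 2 + (x.den:ℤ) ^ 2 : ℤ) : ℚ) = 2 * ((2 * (a^2 + a + b^2 + b) + 1 : ℤ) : ℚ) := by
      push_cast [hnum]; ring
    rw [this, padicValRat.mul two_ne_zero
      (by exact_mod_cast (by omega : (2 * (a^2 + a + b^2 + b) + 1 : ℤ) ≠ 0)), v_two,
      v_odd_int _ (by omega)]
    norm_num
  have h2 : v ((((x.den:ℤ) ^ 2 : ℤ)) : ℚ) = 0 := v_odd_int _ (by omega)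
  omega

lemma no_double (m : ℤ) (hm : 1 < m) (h4 : m % 4 = 2) (x y : ℚ) (hy0 : y ≠ 0)
    (heq : y ^ 2 = x ^ 3 + x - (m:ℚ) ^ 6)
    (key : ((m:ℚ)^4 + 1) * 4 * y^2 = (m:ℚ)^2 * (x^4 - 2*x^2 + 8*(m:ℚ)^6*x + 1)) : False := by
  have hmQ : (m:ℚ) ≠ 0 := by
    have : (0:ℚ) < m := by exact_mod_cast (by omega : (0:ℤ) < m)
    exact ne_of_gt this
  -- x ≠ 0
  have hx0 : x ≠ 0 := by
    intro h0
    rw [h0] at heq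
    have h6 : (0:ℚ) < (m:ℚ)^6 := by
      have : (0:ℚ) < m := by exact_mod_cast (by omega : (0:ℤ) < m)
      positivity
    nlinarith [sq_nonneg y]
  -- valuation of m is 1
  have hvm : v (m:ℚ) = 1 := by
    obtain ⟨k, hk, hkodd⟩ : ∃ k, m = 2 * k ∧ k % 2 = 1 := ⟨m / 2, by omega, by omega⟩
    have : (m:ℚ) = 2 * (k:ℚ) := by rw [hk]; push_cast; ring
    rw [this, padicValRat.mul two_ne_zero (by exact_mod_cast (by omega : k ≠ 0)), v_two,
      v_odd_int _ hkodd]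
    norm_num
  have hm41 : ((m:ℚ)^4 + 1) ≠ 0 := by positivity
  have hvm41 : v ((m:ℚ)^4 + 1) = 0 := by
    obtain ⟨k, hk, hkodd⟩ : ∃ k, m = 2 * k ∧ k % 2 = 1 := ⟨m / 2, by omega, by omega⟩
    have : ((m:ℚ)^4 + 1) = ((16 * k^4 + 1 : ℤ) : ℚ) := by rw [hk]; push_cast; ring
    rw [this, v_odd_int _ (by omega)]
  have hv4 : v (4:ℚ) = 2 := by
    rw [(by norm_num : (4:ℚ) = 2 * 2), padicValRat.mul two_ne_zero two_ne_zero, v_two]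
    norm_num
  have hvm6 : v ((m:ℚ)^6) = 6 := by
    rw [padicValRat.pow (m:ℚ), hvm]; norm_num
  -- numerator nonzero
  have hnum0 : x^4 - 2*x^2 + 8*(m:ℚ)^6*x + 1 ≠ 0 := by
    intro h0
    rw [h0, mul_zero] at key
    exact (mul_ne_zero (mul_ne_zero hm41 (by norm_num)) (pow_ne_zero 2 hy0)) key
  -- key valuation identity : 2 v y = v num
  have hkeyv : 2 * v y = v (x^4 - 2*x^2 + 8*(m:ℚ)^6*x + 1) := by
    have h1 := congrArg (padicValRat 2) key
    rw [padicValRat.mul (mul_ne_zero hm41 (by norm_num)) (pow_ne_zero 2 hy0),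
      padicValRat.mul hm41 (by norm_num), padicValRat.pow y,
      padicValRat.mul (pow_ne_zero 2 hmQ) hnum0, padicValRat.pow (m:ℚ),
      hvm41, hv4, hvm] at h1
    push_cast at h1
    omega
  -- valuation of y² from the curve equation
  have hyy : 2 * v y = v (x^3 + x - (m:ℚ)^6) := by
    have h := padicValRat.pow (p := 2) y (k := 2)
    rw [heq] at h; push_cast at h; omega
  set a := v x with ha
  rcases lt_trichotomy a 0 with hneg | hzero | hpos
  · -- case v x < 0
    have hxm6 : x - (m:ℚ)^6 ≠ 0 := by
      intro h0
      rw [sub_eq_zero] at h0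
      rw [h0, hvm6] at ha
      omega
    have h1 : v (x - (m:ℚ)^6) = a := by
      rw [sub_eq_add_neg, padicValRat.add_eq_of_lt (by rwa [← sub_eq_add_neg]) hx0
        (neg_ne_zero.mpr (by positivity)) (by rw [padicValRat.neg, hvm6]; omega)]
    have hsum : x^3 + (x - (m:ℚ)^6) = y^2 := by linear_combination -heq
    have h2 : 2 * v y = 3 * a := by
      rw [hyy, add_sub_assoc, padicValRat.add_eq_of_lt (by rw [hsum]; positivity)
        (pow_ne_zero 3 hx0) hxm6 (by rw [padicValRat.pow x, h1]; push_cast; omega),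
        padicValRat.pow x]
      push_cast; ring
    have haeven : a % 2 = 0 := by omega
    -- v (8 m⁶ x) = 9 + a
    have h8 : (8:ℚ) * (m:ℚ)^6 * x ≠ 0 := by positivity
    have hv8 : v ((8:ℚ) * (m:ℚ)^6 * x) = 9 + a := by
      rw [padicValRat.mul (by positivity) hx0, padicValRat.mul (by norm_num) (by positivity),
        hvm6, (by norm_num : (8:ℚ) = 2^3), padicValRat.pow (2:ℚ), v_two]
      push_cast; ring
    by_cases hw : 8*(m:ℚ)^6*x + 1 = 0
    · -- then v x = -9, odd, contradiction
      have : (8:ℚ) * (m:ℚ)^6 * x = -1 := by linear_combination hw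
      rw [this, (by norm_num : (-1:ℚ) = ((-1 : ℤ) : ℚ)), v_odd_int _ (by omega)] at hv8
      omega
    have hvw : v (8*(m:ℚ)^6*x + 1) = min (9 + a) 0 := by
      rw [padicValRat.add_eq_min hw h8 one_ne_zero (by rw [hv8]; simp [padicValRat.one]; omega),
        hv8, padicValRat.one]
    by_cases hmid : -2*x^2 + (8*(m:ℚ)^6*x + 1) = 0
    · -- num = x⁴
      have : x^4 - 2*x^2 + 8*(m:ℚ)^6*x + 1 = x^4 := by linear_combination hmid
      rw [this, padicValRat.pow x] at hkeyv
      push_cast at hkeyv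
      omega
    · have hvmid : v (-2*x^2 + (8*(m:ℚ)^6*x + 1)) = min (1 + 2*a) (min (9 + a) 0) := by
        have hv2x2 : v (-2*x^2) = 1 + 2*a := by
          rw [(by ring : -2*x^2 = -(2*x^2)), padicValRat.neg,
            padicValRat.mul two_ne_zero (pow_ne_zero 2 hx0), padicValRat.pow x, v_two]
          push_cast; ring
        rw [padicValRat.add_eq_min hmid (by positivity) hw (by rw [hv2x2, hvw]; omega), hv2x2, hvw]
      have hnum4 : v (x^4 - 2*x^2 + 8*(m:ℚ)^6*x + 1) = 4 * a := by
        have hrw : x^4 - 2*x^2 + 8*(m:ℚ)^6*x + 1 = x^4 + (-2*x^2 + (8*(m:ℚ)^6*x + 1)) := by ring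
        rw [hrw, padicValRat.add_eq_of_lt (by rw [← hrw]; exact hnum0) (pow_ne_zero 4 hx0) hmid
          (by rw [padicValRat.pow x, hvmid]; push_cast; omega), padicValRat.pow x]
        push_cast; ring
      rw [hnum4] at hkeyv
      omega
  · -- case v x = 0
    have hvx21 : v (x^2 + 1) = 1 := v_sq_add_one hx0 (ha.symm.trans hzero)
    have hx210 : x * (x^2 + 1) ≠ 0 := by positivity
    have h1 : v (x * (x^2 + 1)) = 1 := by
      rw [padicValRat.mul hx0 (by positivity), ← ha, hzero, hvx21]
      norm_num
    have hrw : x^3 + x - (m:ℚ)^6 = x * (x^2 + 1) + (-(m:ℚ)^6) := by ring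
    have h2 : 2 * v y = 1 := by
      rw [hyy, hrw, padicValRat.add_eq_of_lt (by rw [← hrw, ← heq]; positivity) hx210
        (neg_ne_zero.mpr (by positivity)) (by rw [h1, padicValRat.neg, hvm6]; omega), h1]
    omega
  · -- case v x > 0
    have hx31 : x^3 + x ≠ 0 := by
      intro h0
      have : x * (x^2 + 1) = 0 := by linear_combination h0
      rcases mul_eq_zero.mp this with h | h
      · exact hx0 h
      · nlinarith [sq_nonneg x]
    have hge : 1 ≤ 2 * v y := by
      have hb1 : min (v (x^3 + x)) (v (-(m:ℚ)^6)) ≤ v ((x^3 + x) + (-(m:ℚ)^6)) :=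
        padicValRat.min_le_padicValRat_add (by
          rw [(by ring : (x^3 + x) + (-(m:ℚ)^6) = x^3 + x - (m:ℚ)^6), ← heq]; positivity)
      have hb2 : min (v (x^3)) (v x) ≤ v (x^3 + x) := padicValRat.min_le_padicValRat_add hx31
      rw [padicValRat.pow x] at hb2
      rw [padicValRat.neg, hvm6] at hb1
      rw [(by ring : (x^3 + x) + (-(m:ℚ)^6) = x^3 + x - (m:ℚ)^6), ← hyy] at hb1
      push_cast at hb2
      omega
    -- v num = 0
    have hnum : v (x^4 - 2*x^2 + 8*(m:ℚ)^6*x + 1) = 0 := by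
      by_cases hg : x^4 - 2*x^2 + 8*(m:ℚ)^6*x = 0
      · have : x^4 - 2*x^2 + 8*(m:ℚ)^6*x + 1 = 1 := by linear_combination hg
        rw [this, padicValRat.one]
      · have hvg : 1 ≤ v (x^4 - 2*x^2 + 8*(m:ℚ)^6*x) := by
          by_cases hu : -2*x^2 + 8*(m:ℚ)^6*x = 0
          · have : x^4 - 2*x^2 + 8*(m:ℚ)^6*x = x^4 := by linear_combination hu
            rw [this, padicValRat.pow x]; push_cast; omega
          · have hu2 : -2*x + 8*(m:ℚ)^6 ≠ 0 := by
              intro h0; apply hu; rw [(by ring : -2*x^2 + 8*(m:ℚ)^6*x = x * (-2*x + 8*(m:ℚ)^6)),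
                h0, mul_zero]
            have hvu2 : 1 ≤ v (-2*x + 8*(m:ℚ)^6) := by
              have := padicValRat.min_le_padicValRat_add (p := 2) (q := -2*x)
                (r := 8*(m:ℚ)^6) hu2
              have hv2x : v (-2*x) = 1 + a := by
                rw [(by ring : -2*x = -(2*x)), padicValRat.neg,
                  padicValRat.mul two_ne_zero hx0, v_two]
              have hv8m : v (8*(m:ℚ)^6) = 9 := by
                rw [padicValRat.mul (by norm_num) (by positivity), hvm6,
                  (by norm_num : (8:ℚ) = 2^3), padicValRat.pow (2:ℚ), v_two]
                push_cast
              rw [hv2x, hv8m] at this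
              omega
            have hvu : 1 ≤ v (-2*x^2 + 8*(m:ℚ)^6*x) := by
              rw [(by ring : -2*x^2 + 8*(m:ℚ)^6*x = x * (-2*x + 8*(m:ℚ)^6)),
                padicValRat.mul hx0 hu2]
              omega
            have := padicValRat.min_le_padicValRat_add (p := 2) (q := x^4)
              (r := -2*x^2 + 8*(m:ℚ)^6*x) (by
                rwa [(by ring : x^4 + (-2*x^2 + 8*(m:ℚ)^6*x) = x^4 - 2*x^2 + 8*(m:ℚ)^6*x)] )
            rw [(by ring : x^4 + (-2*x^2 + 8*(m:ℚ)^6*x) = x^4 - 2*x^2 + 8*(m:ℚ)^6*x),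
              padicValRat.pow x] at this
            push_cast at this
            omega
        have : v ((x^4 - 2*x^2 + 8*(m:ℚ)^6*x) + 1) = min (v (x^4 - 2*x^2 + 8*(m:ℚ)^6*x)) 0 := by
          rw [padicValRat.add_eq_min (by rwa [(by ring : (x^4 - 2*x^2 + 8*(m:ℚ)^6*x) + 1
            = x^4 - 2*x^2 + 8*(m:ℚ)^6*x + 1)]) hg one_ne_zero
            (by rw [padicValRat.one]; omega), padicValRat.one]
        rw [(by ring : (x^4 - 2*x^2 + 8*(m:ℚ)^6*x) + 1 = x^4 - 2*x^2 + 8*(m:ℚ)^6*x + 1)] at this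
        rw [this]
        omega
    rw [hnum] at hkeyv
    omega


open WeierstrassCurve.Affine in
/-- For `m > 1` with `m ≡ 2 (mod 4)`, the point `P' + Q'` on `E'_m : y² = x³ + x - m⁶`, where
`P' = (m², m)` and `Q' = (m⁶, m⁹)`, has affine coordinates `((m⁴+1)/m², (-2m⁴-1)/m³)` and does
not lie in `2E'_m(ℚ)`, i.e. `P' + Q'` is nontrivial in `E'_m(ℚ)/2E'_m(ℚ)`. -/
theorem Em'_PQ_nontrivial_mod_two
    (m : ℤ) (hm : 1 < m) (h4 : m % 4 = 2)
    (hP : (Em' m).toAffine.Nonsingular ((m : ℚ) ^ 2) (m : ℚ))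
    (hQ : (Em' m).toAffine.Nonsingular ((m : ℚ) ^ 6) ((m : ℚ) ^ 9))
    (hPQ : (Em' m).toAffine.Nonsingular (((m : ℚ) ^ 4 + 1) / (m : ℚ) ^ 2)
      ((-2 * (m : ℚ) ^ 4 - 1) / (m : ℚ) ^ 3)) :
    WeierstrassCurve.Affine.Point.some _ _ hP + WeierstrassCurve.Affine.Point.some _ _ hQ =
        WeierstrassCurve.Affine.Point.some _ _ hPQ ∧
      WeierstrassCurve.Affine.Point.some _ _ hP + WeierstrassCurve.Affine.Point.some _ _ hQ ∉
        (doublingHom (Em' m).toAffine.Point).range := by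
  have hm2 : (2:ℚ) ≤ (m:ℚ) := by exact_mod_cast hm
  have hmQ : (m:ℚ) ≠ 0 := by positivity
  have hx12 : (m : ℚ) ^ 2 ≠ (m : ℚ) ^ 6 := by
    intro h; nlinarith [pow_le_pow_right₀ (by linarith : (1:ℚ) ≤ m) (by norm_num : 2 ≤ 6),
      sq_nonneg ((m:ℚ)^3), sq_nonneg ((m:ℚ)^2 - 1)]
  have hadd : Point.some _ _ hP + Point.some _ _ hQ = Point.some _ _ hPQ := by
    rw [Point.add_of_X_ne hx12]
    have hs : (Em' m).toAffine.slope ((m:ℚ)^2) ((m:ℚ)^6) ((m:ℚ)) ((m:ℚ)^9)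
        = ((m:ℚ)^4 + 1) / (m:ℚ) := by
      rw [slope_of_X_ne hx12]
      rw [div_eq_div_iff (by intro h; exact hx12 (by linarith [sub_eq_zero.mp h])) hmQ]
      ring
    refine some_congr' ?_ ?_ _ _
    · show (Em' m).toAffine.addX _ _ _ = _
      rw [hs]; simp only [Em', addX, WeierstrassCurve.toAffine]
      field_simp
      ring
    · show (Em' m).toAffine.addY _ _ _ _ = _
      rw [hs]; simp only [Em', addX, addY, negAddY, negY, WeierstrassCurve.toAffine]
      field_simp
      ring
  refine ⟨hadd, ?_⟩
  rw [hadd]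
  rintro ⟨T, hT⟩
  have h2T : T + T = Point.some _ _ hPQ := by
    rw [← two_smul ℤ T]; exact hT
  clear hT
  induction T with
  | zero =>
    rw [← Point.zero_def, add_zero] at h2T
    exact Point.some_ne_zero hPQ h2T.symm
  | @some x y h =>
    by_cases hy : y = (Em' m).toAffine.negY x y
    · rw [Point.add_of_Y_eq rfl hy] at h2T
      exact Point.some_ne_zero hPQ h2T.symm
    · rw [Point.add_of_Y_ne hy] at h2T
      injection h2T with hX hY
      have hy0 : y ≠ 0 := by
        intro h0; apply hy; simp [Em', negY, WeierstrassCurve.toAffine, h0]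
      have heq : y ^ 2 = x ^ 3 + x - (m:ℚ) ^ 6 := by
        have := ((Em' m).toAffine.nonsingular_iff x y).mp h |>.1
        rw [equation_iff] at this
        simpa [Em', WeierstrassCurve.toAffine, sub_eq_add_neg] using this
      have hs : (Em' m).toAffine.slope x x y y = (3 * x ^ 2 + 1) / (2 * y) := by
        rw [slope_of_Y_ne rfl hy]
        simp [Em', negY, WeierstrassCurve.toAffine]
        ring_nf
      have hX' : ((3 * x ^ 2 + 1) / (2 * y)) ^ 2 - x - x = ((m:ℚ)^4 + 1) / (m:ℚ)^2 := by
        rw [← hs, ← hX]; simp [Em', addX, WeierstrassCurve.toAffine]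
      have key : ((m:ℚ)^4 + 1) * 4 * y^2 = (m:ℚ)^2 * (x^4 - 2*x^2 + 8*(m:ℚ)^6*x + 1) := by
        field_simp at hX'
        linear_combination (-1 : ℚ) * hX' + (-8*x*(m:ℚ)^2) * heq
      exact no_double m hm h4 x y hy0 heq key
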